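/- Let f : ℝ^d → ℝ be differentiable with L-Lipschitz gradient (L > 0), let η > 0, and let θ, g ∈ ℝ^d. Then f(θ − η g) ≤ f(θ) − (η/2 − L η²) ‖∇f(θ)‖₂² + (η/2 + L η²) ‖g − ∇f(θ)‖₂². -/

import Mathlib

open scoped RealInnerProductSpace

/-- Descent lemma: for `f` with `L`-Lipschitz gradient,
`f (θ + v) ≤ f θ + ⟪∇f θ, v⟫ + L/2 ‖v‖²`. -/
lemma descent_lemma {d : ℕ} (f : EuclideanSpace ℝ (Fin d) → ℝ) (L : ℝ)
    (hL : 0 < L) (hdiff : Differentiable ℝ f)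
    (hlip : ∀ u v : EuclideanSpace ℝ (Fin d),
      ‖gradient f u - gradient f v‖ ≤ L * ‖u - v‖)
    (θ v : EuclideanSpace ℝ (Fin d)) :
    f (θ + v) ≤ f θ + ⟪gradient f θ, v⟫ + L * ‖v‖ ^ 2 / 2 := by
  set φ : ℝ → ℝ := fun t =>
    f (θ + t • v) - t * ⟪gradient f θ, v⟫ - t ^ 2 * (L * ‖v‖ ^ 2 / 2) with hφ
  have key : ∀ t : ℝ, HasDerivAt φ
      (⟪gradient f (θ + t • v), v⟫ - ⟪gradient f θ, v⟫ - t * (L * ‖v‖ ^ 2)) t := by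
    intro t
    have h1 : HasDerivAt (fun t : ℝ => θ + t • v) v t := by
      simpa using ((hasDerivAt_id t).smul_const v).const_add θ
    have h2 : HasDerivAt (fun t : ℝ => f (θ + t • v)) ⟪gradient f (θ + t • v), v⟫ t := by
      have := ((hdiff (θ + t • v)).hasGradientAt.hasFDerivAt).comp_hasDerivAt t h1
      simpa [InnerProductSpace.toDual_apply_apply, Function.comp_def] using this
    have h3 : HasDerivAt (fun t : ℝ => t * ⟪gradient f θ, v⟫) ⟪gradient f θ, v⟫ t := by
      simpa using (hasDerivAt_id t).mul_const ⟪gradient f θ, v⟫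
    have h4 : HasDerivAt (fun t : ℝ => t ^ 2 * (L * ‖v‖ ^ 2 / 2)) (t * (L * ‖v‖ ^ 2)) t := by
      have := (hasDerivAt_pow 2 t).mul_const (L * ‖v‖ ^ 2 / 2)
      convert this using 1
      · rfl
      · rfl
      ring
    exact (h2.sub h3).sub h4
  have mono : AntitoneOn φ (Set.Icc (0 : ℝ) 1) := by
    apply antitoneOn_of_deriv_nonpos (convex_Icc 0 1)
    · exact fun t _ => (key t).continuousAt.continuousWithinAt
    · exact fun t _ => (key t).differentiableAt.differentiableWithinAt
    · intro t ht
      rw [interior_Icc] at ht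
      rw [(key t).deriv]
      have hcs : ⟪gradient f (θ + t • v) - gradient f θ, v⟫ ≤
          ‖gradient f (θ + t • v) - gradient f θ‖ * ‖v‖ := real_inner_le_norm _ _
      have hl : ‖gradient f (θ + t • v) - gradient f θ‖ ≤ L * (t * ‖v‖) := by
        have := hlip (θ + t • v) θ
        simpa [norm_smul, abs_of_pos ht.1] using this
      have hvn : (0 : ℝ) ≤ ‖v‖ := norm_nonneg _
      rw [inner_sub_left] at hcs
      nlinarith [mul_le_mul_of_nonneg_right hl hvn]
  have h01 := mono (Set.left_mem_Icc.2 zero_le_one) (Set.right_mem_Icc.2 zero_le_one)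
    zero_le_one
  simp only [hφ, one_smul, zero_smul, add_zero, one_pow, one_mul, zero_mul, sub_zero,
    ne_eq, OfNat.ofNat_ne_zero, not_false_eq_true, zero_pow] at h01
  linarith

theorem stmt_14 {d : ℕ} (f : EuclideanSpace ℝ (Fin d) → ℝ) (L η : ℝ)
    (hL : 0 < L) (hdiff : Differentiable ℝ f)
    (hlip : ∀ u v : EuclideanSpace ℝ (Fin d),
      ‖gradient f u - gradient f v‖ ≤ L * ‖u - v‖)
    (hη0 : 0 < η) (θ g : EuclideanSpace ℝ (Fin d)) :
    f (θ - η • g) ≤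
      f θ - (η / 2 - L * η ^ 2) * ‖gradient f θ‖ ^ 2
        + (η / 2 + L * η ^ 2) * ‖g - gradient f θ‖ ^ 2 := by
  have hd := descent_lemma f L hL hdiff hlip θ (-(η • g))
  rw [← sub_eq_add_neg] at hd
  set a := gradient f θ with ha
  have hnv : ‖-(η • g)‖ = η * ‖g‖ := by
    rw [norm_neg, norm_smul, Real.norm_eq_abs, abs_of_pos hη0]
  have hiv : ⟪a, -(η • g)⟫ = -(η * ⟪a, g⟫) := by
    rw [inner_neg_right, real_inner_smul_right]
  rw [hnv, hiv] at hd
  -- expand everything in terms of a and e := g - a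
  have hge : a + (g - a) = g := by abel
  have hgn : ‖g‖ ^ 2 = ‖a‖ ^ 2 + 2 * ⟪a, g - a⟫ + ‖g - a‖ ^ 2 := by
    rw [← hge, norm_add_sq_real]; rw [hge]
  have hag : ⟪a, g⟫ = ‖a‖ ^ 2 + ⟪a, g - a⟫ := by
    rw [inner_sub_right, real_inner_self_eq_norm_sq]; ring
  have habs : |⟪a, g - a⟫| ≤ ‖a‖ * ‖g - a‖ := abs_real_inner_le_norm _ _
  have hcoef : |L * η ^ 2 - η| ≤ η + L * η ^ 2 := by
    rw [abs_le]
    constructor <;> nlinarith [mul_pos hL (mul_pos hη0 hη0)]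
  have key : (L * η ^ 2 - η) * ⟪a, g - a⟫ ≤ (η + L * η ^ 2) * (‖a‖ * ‖g - a‖) := by
    calc (L * η ^ 2 - η) * ⟪a, g - a⟫ ≤ |(L * η ^ 2 - η) * ⟪a, g - a⟫| := le_abs_self _
      _ = |L * η ^ 2 - η| * |⟪a, g - a⟫| := abs_mul _ _
      _ ≤ (η + L * η ^ 2) * (‖a‖ * ‖g - a‖) :=
          mul_le_mul hcoef habs (abs_nonneg _)
            (by positivity)
  have hsq : 0 ≤ (η + L * η ^ 2) * (‖a‖ - ‖g - a‖) ^ 2 := by positivity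
  have e1 : L * (η * ‖g‖) ^ 2 / 2
      = L * η ^ 2 / 2 * (‖a‖ ^ 2 + 2 * ⟪a, g - a⟫ + ‖g - a‖ ^ 2) := by
    rw [mul_pow, hgn]; ring
  rw [e1, hag] at hd
  nlinarith [key, hsq, hd]
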